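/- Let p, q, r be distinct primes, let α, β, δ ≥ 1 with α + β + δ ≥ 7, and let G be a non-abelian solvable group of order p^α · q^β · r^δ. Then the intersection graph of subgroups I(G) contains K_5 as a subgraph, i.e., I(G) has a clique on 5 vertices. -/

import Mathlib

open SimpleGraph

/-- The intersection graph of subgroups of a group `G`: vertices are the
nontrivial proper subgroups of `G`, and two distinct vertices are adjacent
iff the corresponding subgroups have nontrivial intersection. -/
def interGraph (G : Type*) [Group G] :
    SimpleGraph {H : Subgroup G // H ≠ ⊥ ∧ H ≠ ⊤} where
  Adj H K := H ≠ K ∧ H.1 ⊓ K.1 ≠ ⊥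
  symm := by
    constructor
    rintro H K ⟨hne, hint⟩
    exact ⟨hne.symm, by rwa [inf_comm] at hint⟩
  loopless := by
    constructor
    rintro H ⟨hne, _⟩
    exact hne rfl

lemma aux_commutator_ne_top (G : Type*) [Group G] [Group.IsSolvable G] [Nontrivial G] :
    commutator G ≠ ⊤ := by
  intro h
  obtain ⟨n, hn⟩ := Group.IsSolvable.solvable (G := G)
  have key : ∀ m, derivedSeries G m = ⊤ := by
    intro m
    induction m with
    | zero => rfl
    | succ m ih => rw [derivedSeries_succ, ih, ← commutator_def, h]
  rw [key n] at hn
  exact absurd hn top_ne_bot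

open scoped commutatorElement in
lemma aux_exists_prime_index (G : Type*) [Group G] [Finite G] [Group.IsSolvable G] [Nontrivial G] :
    ∃ (M : Subgroup G) (pp : ℕ), pp.Prime ∧ Nat.card M * pp = Nat.card G ∧ M < ⊤ := by
  obtain ⟨M, hM, hle⟩ :=
    (eq_top_or_exists_le_coatom (commutator G)).resolve_left (aux_commutator_ne_top G)
  have hMlt : M < ⊤ := hM.1.lt_top
  haveI hnorm : M.Normal := by
    constructor
    intro m hm g
    have h1 : ⁅g, m⁆ ∈ M := hle (commutator_def G ▸
      Subgroup.commutator_mem_commutator (Subgroup.mem_top g) (Subgroup.mem_top m))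
    have : g * m * g⁻¹ = ⁅g, m⁆ * m := by
      rw [commutatorElement_def]; group
    rw [this]
    exact M.mul_mem h1 hm
  letI : CommGroup (G ⧸ M) :=
    { (inferInstance : Group (G ⧸ M)) with
      mul_comm := by
        intro a b
        induction a using QuotientGroup.induction_on with | _ a =>
        induction b using QuotientGroup.induction_on with | _ b =>
        rw [← QuotientGroup.mk_mul, ← QuotientGroup.mk_mul, QuotientGroup.eq]
        have : (a * b)⁻¹ * (b * a) = ⁅b⁻¹, a⁻¹⁆ := by
          rw [commutatorElement_def]; group
        rw [this]
        exact hle (commutator_def G ▸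
          Subgroup.commutator_mem_commutator (Subgroup.mem_top _) (Subgroup.mem_top _)) }
  haveI : Nontrivial (G ⧸ M) := by
    obtain ⟨x, -, hx⟩ := SetLike.exists_of_lt hMlt
    exact ⟨⟨(x : G ⧸ M), 1, fun h => hx ((QuotientGroup.eq_one_iff x).mp h)⟩⟩
  haveI : IsSimpleGroup (G ⧸ M) := by
    constructor
    intro H _
    have hle' : M ≤ H.comap (QuotientGroup.mk' M) := by
      intro x hx
      have hx1 : (QuotientGroup.mk' M) x = 1 := (QuotientGroup.eq_one_iff x).mpr hx
      rw [Subgroup.mem_comap, hx1]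
      exact H.one_mem
    have hinj : Function.Injective
        (Subgroup.comap (QuotientGroup.mk' M) : Subgroup (G ⧸ M) → Subgroup G) :=
      Subgroup.comap_injective (QuotientGroup.mk'_surjective M)
    rcases hle'.lt_or_eq with h | h
    · right
      have := hM.2 _ h
      apply hinj
      rw [Subgroup.comap_top, this]
    · left
      apply hinj
      rw [MonoidHom.comap_bot, QuotientGroup.ker_mk', ← h]
  refine ⟨M, Nat.card (G ⧸ M), IsSimpleGroup.prime_card, ?_, hMlt⟩
  rw [mul_comm]
  exact (Subgroup.card_eq_card_quotient_mul_card_subgroup M).symm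

lemma aux_exists_chain (k : ℕ) : ∀ (G : Type u) [Group G] [Finite G] [Group.IsSolvable G],
    k = (Nat.card G).primeFactorsList.length →
    ∃ c : ℕ → Subgroup G, c 0 = ⊥ ∧ c k = ⊤ ∧ ∀ i < k, c i < c (i + 1) := by
  induction k with
  | zero =>
    intro G _ _ _ h
    have h0 : Nat.card G ≠ 0 := Nat.card_pos.ne'
    have : Nat.card G = 1 := by
      rcases (Nat.primeFactorsList_eq_nil _).mp (List.length_eq_zero_iff.mp h.symm) with h1 | h1
      · exact absurd h1 h0
      · exact h1
    haveI : Subsingleton G := Nat.card_eq_one_iff_unique.mp this |>.1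
    refine ⟨fun _ => ⊥, rfl, ?_, by omega⟩
    ext x
    simp [Subsingleton.elim x 1]
  | succ k ih =>
    intro G _ _ _ h
    haveI : Nontrivial G := by
      rw [← Finite.one_lt_card_iff_nontrivial]
      rcases Nat.lt_or_ge 1 (Nat.card G) with h1 | h1
      · exact h1
      · exfalso
        interval_cases hc : Nat.card G
        · exact absurd hc Nat.card_pos.ne'
        · simp [hc] at h
    obtain ⟨M, pp, hpp, hmul, hMlt⟩ := aux_exists_prime_index G
    have hM0 : Nat.card M ≠ 0 := Nat.card_pos.ne'
    have hlen : k = (Nat.card M).primeFactorsList.length := by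
      have hperm := Nat.perm_primeFactorsList_mul hM0 hpp.ne_zero
      rw [hmul] at hperm
      have := hperm.length_eq
      rw [List.length_append, Nat.primeFactorsList_prime hpp, List.length_singleton] at this
      omega
    obtain ⟨c, hc0, hck, hcstep⟩ := ih M hlen
    have hmapinj : Function.Injective (Subgroup.map M.subtype) :=
      Subgroup.map_injective M.subtype_injective
    have hmapmono : StrictMono (Subgroup.map M.subtype) :=
      Monotone.strictMono_of_injective (fun _ _ h => Subgroup.map_mono h) hmapinj
    refine ⟨fun i => if i ≤ k then Subgroup.map M.subtype (c i) else ⊤, ?_, ?_, ?_⟩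
    · simp [hc0]
    · simp
    · intro i hi
      rcases Nat.lt_or_ge i k with hik | hik
      · have h1 : i ≤ k := hik.le
        have h2 : i + 1 ≤ k := hik
        simp only [if_pos h1, if_pos h2]
        exact hmapmono (hcstep i hik)
      · have hik' : i = k := by omega
        subst hik'
        simp only [le_refl, if_pos, if_neg (by omega : ¬ i + 1 ≤ i)]
        rw [hck, ← MonoidHom.range_eq_map, Subgroup.range_subtype]
        exact hMlt

theorem intersectionGraph_has_K5_of_nonabelian_solvable_three_primes_large
    (p q r α β δ : ℕ) (hp : p.Prime) (hq : q.Prime) (hr : r.Prime)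
    (hpq : p ≠ q) (hpr : p ≠ r) (hqr : q ≠ r)
    (hα : 1 ≤ α) (hβ : 1 ≤ β) (hδ : 1 ≤ δ) (hsum : 7 ≤ α + β + δ)
    (G : Type*) [Group G] [Group.IsSolvable G]
    (hcard : Nat.card G = p ^ α * q ^ β * r ^ δ)
    (hna : ¬ ∀ a b : G, a * b = b * a) :
    ∃ s, (interGraph G).IsNClique 5 s := by
  classical
  haveI : Finite G := Nat.finite_of_card_ne_zero (by
    rw [hcard]
    exact Nat.mul_ne_zero (Nat.mul_ne_zero (pow_ne_zero _ hp.pos.ne')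
      (pow_ne_zero _ hq.pos.ne')) (pow_ne_zero _ hr.pos.ne'))
  set K := (Nat.card G).primeFactorsList.length with hK
  have hKval : K = α + β + δ := by
    rw [hK, hcard]
    have h1 : (p ^ α * q ^ β).primeFactorsList.length = α + β := by
      have := (Nat.perm_primeFactorsList_mul (pow_ne_zero α hp.pos.ne')
        (pow_ne_zero β hq.pos.ne')).length_eq
      rw [List.length_append, hp.primeFactorsList_pow, hq.primeFactorsList_pow,
        List.length_replicate, List.length_replicate] at this
      exact this
    have h2 := (Nat.perm_primeFactorsList_mul
      (Nat.mul_ne_zero (pow_ne_zero α hp.pos.ne') (pow_ne_zero β hq.pos.ne'))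
      (pow_ne_zero δ hr.pos.ne')).length_eq
    rw [List.length_append, hr.primeFactorsList_pow, List.length_replicate, h1] at h2
    exact h2
  have hK7 : 7 ≤ K := hKval ▸ hsum
  obtain ⟨c, hc0, hcK, hcstep⟩ := aux_exists_chain K G rfl
  have hmono : ∀ j ≤ K, ∀ i < j, c i < c j := by
    intro j hj
    induction j with
    | zero => omega
    | succ j ihj =>
      intro i hi
      rcases Nat.lt_or_ge i j with hij | hij
      · exact (ihj (by omega) i hij).trans (hcstep j (by omega))
      · have : i = j := by omega
        subst this
        exact hcstep i (by omega)
  have hbot : ∀ i, 1 ≤ i → i ≤ 5 → c i ≠ ⊥ := by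
    intro i h1 h5
    have : c 0 < c i := hmono i (by omega) 0 (by omega)
    rw [hc0] at this
    exact this.ne'
  have htop : ∀ i, i ≤ 5 → c i ≠ ⊤ := by
    intro i h5
    have : c i < c K := hmono K le_rfl i (by omega)
    rw [hcK] at this
    exact this.ne
  let v : Fin 5 → {H : Subgroup G // H ≠ ⊥ ∧ H ≠ ⊤} := fun j =>
    ⟨c (j + 1), hbot (j + 1) (by omega) (by omega), htop (j + 1) (by omega)⟩
  have hcinj : ∀ i j : Fin 5, (i : ℕ) < (j : ℕ) → c (i + 1) < c (j + 1) := by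
    intro i j hij
    exact hmono (j + 1) (by omega) (i + 1) (by omega)
  have hvinj : Function.Injective v := by
    intro i j hij
    by_contra hne
    have hne' : (i : ℕ) ≠ (j : ℕ) := fun h => hne (Fin.ext h)
    have : c (i + 1) = c (j + 1) := congrArg (fun x => x.1) hij
    rcases Nat.lt_or_ge (i : ℕ) (j : ℕ) with h | h
    · exact (hcinj i j h).ne this
    · exact (hcinj j i (by omega)).ne this.symm
  refine ⟨Finset.image v Finset.univ, ?_, ?_⟩
  · intro a ha b hb hab
    simp only [Finset.coe_image, Set.mem_image] at ha hb
    obtain ⟨i, -, rfl⟩ := ha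
    obtain ⟨j, -, rfl⟩ := hb
    refine ⟨hab, ?_⟩
    have hne' : (i : ℕ) ≠ (j : ℕ) := by
      intro h
      exact hab (congrArg v (Fin.ext h))
    rcases Nat.lt_or_ge (i : ℕ) (j : ℕ) with h | h
    · have hle : c (i + 1) ≤ c (j + 1) := (hcinj i j h).le
      rw [inf_eq_left.mpr hle]
      exact hbot (i + 1) (by omega) (by omega)
    · have hle : c (j + 1) ≤ c (i + 1) := (hcinj j i (by omega)).le
      rw [inf_eq_right.mpr hle]
      exact hbot (j + 1) (by omega) (by omega)
  · rw [Finset.card_image_of_injective _ hvinj, Finset.card_univ, Fintype.card_fin]
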